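/- Let J be a group and n > 1 an integer, and let X = J × Fin n with J acting by left multiplication on the first coordinate. For σ ∈ Sym_J(X), let τ_σ ∈ Perm(Fin n) and c_i(σ) ∈ J (for i ∈ Fin n) be determined by σ(1, i) = (c_i(σ), τ_σ(i)). Then σ lies in the Rubik group Rub_J(X) (the commutator subgroup of Sym_J(X)) if and only if τ_σ is an even permutation of Fin n and the product over i ∈ Fin n of the images of c_i(σ) in the abelianization of J equals the identity. -/

import Mathlib

/-- The subgroup `Sym_J(X)` of permutations of `X = J × Fin n` commuting with the left
multiplication action of `J` on the first coordinate. -/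
def EquivariantPerm (J : Type*) [Group J] (n : ℕ) : Subgroup (Equiv.Perm (J × Fin n)) where
  carrier := {σ | ∀ (j : J) (x : J × Fin n), σ (j * x.1, x.2) = (j * (σ x).1, (σ x).2)}
  one_mem' := by intro j x; rfl
  mul_mem' := by
    intro σ τ hσ hτ j x
    simp only [Equiv.Perm.mul_apply]
    rw [hτ, hσ]
  inv_mem' := by
    intro σ hσ j x
    apply σ.injective
    rw [hσ]
    simp

/-- The Rubik group `Rub_J(X)`: the commutator subgroup of `Sym_J(X)`, regarded as a
subgroup of the symmetric group of `X = J × Fin n`. -/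
def RubikGroup (J : Type*) [Group J] (n : ℕ) : Subgroup (Equiv.Perm (J × Fin n)) :=
  ⁅EquivariantPerm J n, EquivariantPerm J n⁆

namespace Stmt8Aux

open Equiv
open scoped commutatorElement

variable {J : Type*} [Group J] {n : ℕ}

/-- The permutation of `J × Fin n` acting only on the second coordinate. -/
def PeH : Equiv.Perm (Fin n) →* Equiv.Perm (J × Fin n) where
  toFun π :=
    { toFun := fun x => (x.1, π x.2)
      invFun := fun x => (x.1, π⁻¹ x.2)
      left_inv := fun x => by simp
      right_inv := fun x => by simp }
  map_one' := Equiv.ext fun x => rfl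
  map_mul' a b := Equiv.ext fun x => rfl

@[simp] lemma PeH_apply (π : Equiv.Perm (Fin n)) (x : J × Fin n) :
    PeH π x = (x.1, π x.2) := rfl

lemma PeH_inv (π : Equiv.Perm (Fin n)) : (PeH (J := J) π)⁻¹ = PeH π⁻¹ :=
  Equiv.ext fun _ => rfl

/-- The "twist" permutation of `J × Fin n`. -/
def De (f : Fin n → J) : Equiv.Perm (J × Fin n) where
  toFun x := (x.1 * f x.2, x.2)
  invFun x := (x.1 * (f x.2)⁻¹, x.2)
  left_inv x := by simp
  right_inv x := by simp

@[simp] lemma De_apply (f : Fin n → J) (x : J × Fin n) :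
    De f x = (x.1 * f x.2, x.2) := rfl

lemma De_inv (f : Fin n → J) : (De f)⁻¹ = De (fun i => (f i)⁻¹) :=
  Equiv.ext fun _ => rfl

lemma De_mul (f g : Fin n → J) : De f * De g = De (fun i => g i * f i) :=
  Equiv.ext fun x => by simp [mul_assoc]

lemma PeH_mem (π : Equiv.Perm (Fin n)) : PeH (J := J) π ∈ EquivariantPerm J n :=
  fun _ _ => rfl

lemma De_mem (f : Fin n → J) : De f ∈ EquivariantPerm J n := by
  intro j x
  simp [mul_assoc]

lemma key {σ : Equiv.Perm (J × Fin n)} (hσ : σ ∈ EquivariantPerm J n) (j : J) (i : Fin n) :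
    σ (j, i) = (j * (σ (1, i)).1, (σ (1, i)).2) := by
  simpa using hσ j (1, i)

/-- The induced permutation of `Fin n`. -/
def tauE (σ : Equiv.Perm (J × Fin n)) (hσ : σ ∈ EquivariantPerm J n) : Equiv.Perm (Fin n) where
  toFun i := (σ (1, i)).2
  invFun i := (σ⁻¹ (1, i)).2
  left_inv i := by
    have h := key ((EquivariantPerm J n).inv_mem hσ) ((σ (1, i)).1) ((σ (1, i)).2)
    rw [Prod.mk.eta, (by exact σ.symm_apply_apply : ∀ y, σ⁻¹ (σ y) = y)] at h
    exact (congrArg Prod.snd h).symm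
  right_inv i := by
    have h := key hσ ((σ⁻¹ (1, i)).1) ((σ⁻¹ (1, i)).2)
    rw [Prod.mk.eta, (by exact σ.apply_symm_apply : ∀ y, σ (σ⁻¹ y) = y)] at h
    exact (congrArg Prod.snd h).symm

@[simp] lemma tauE_apply (σ : Equiv.Perm (J × Fin n)) (hσ : σ ∈ EquivariantPerm J n)
    (i : Fin n) : tauE σ hσ i = (σ (1, i)).2 := rfl

lemma decomp {σ : Equiv.Perm (J × Fin n)} (hσ : σ ∈ EquivariantPerm J n) :
    σ = PeH (tauE σ hσ) * De (fun i => (σ (1, i)).1) := by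
  apply Equiv.ext
  intro x
  conv_lhs => rw [← Prod.mk.eta (p := x)]
  rw [key hσ]
  rfl

/-- The group homomorphism `Sym_J(X) →* Perm (Fin n)`. -/
def tauHom : EquivariantPerm J n →* Equiv.Perm (Fin n) where
  toFun σ := tauE σ.1 σ.2
  map_one' := Equiv.ext fun i => rfl
  map_mul' σ ρ := by
    apply Equiv.ext
    intro i
    show ((σ.1 * ρ.1) (1, i)).2 = (σ.1 (1, (ρ.1 (1, i)).2)).2
    rw [Equiv.Perm.mul_apply]
    conv_lhs => rw [← Prod.mk.eta (p := ρ.1 (1, i))]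
    rw [key σ.2]

/-- The group homomorphism `Sym_J(X) →* Abelianization J`. -/
def CHom : EquivariantPerm J n →* Abelianization J where
  toFun σ := ∏ i : Fin n, Abelianization.of ((σ.1 (1, i)).1)
  map_one' := by simp
  map_mul' σ ρ := by
    have hval : ∀ i : Fin n,
        ((σ.1 * ρ.1) (1, i)).1 = (ρ.1 (1, i)).1 * (σ.1 (1, (ρ.1 (1, i)).2)).1 := by
      intro i
      rw [Equiv.Perm.mul_apply]
      conv_lhs => rw [← Prod.mk.eta (p := ρ.1 (1, i))]
      rw [key σ.2]
    show (∏ i : Fin n, Abelianization.of (((σ.1 * ρ.1) (1, i)).1)) = _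
    simp_rw [hval, map_mul, Finset.prod_mul_distrib]
    rw [mul_comm]
    congr 1
    exact Equiv.prod_comp (tauE ρ.1 ρ.2) (fun j => Abelianization.of ((σ.1 (1, j)).1))

/-- Combined homomorphism to an abelian group. -/
def psi : EquivariantPerm J n →* ℤˣ × Abelianization J :=
  MonoidHom.prod ((Equiv.Perm.sign).comp tauHom) CHom

lemma rubik_le_ker :
    RubikGroup J n ≤ Subgroup.map (EquivariantPerm J n).subtype (psi (J := J) (n := n)).ker := by
  rw [RubikGroup, Subgroup.commutator_le]
  intro g hg k hk
  refine ⟨⁅(⟨g, hg⟩ : EquivariantPerm J n), ⟨k, hk⟩⁆, ?_, ?_⟩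
  · have h : psi (J := J) (n := n) ⁅(⟨g, hg⟩ : EquivariantPerm J n), ⟨k, hk⟩⁆
        = ⁅psi ⟨g, hg⟩, psi ⟨k, hk⟩⁆ := map_commutatorElement _ _ _
    simp only [SetLike.mem_coe, MonoidHom.mem_ker]
    rw [h]
    exact commutatorElement_eq_one_iff_commute.mpr (mul_comm _ _)
  · rw [map_commutatorElement]
    rfl

/-! ### Hard direction: even permutations -/

lemma PeH_mem_rubik {π : Equiv.Perm (Fin n)} (hπ : Equiv.Perm.sign π = 1) :
    PeH (J := J) π ∈ RubikGroup J n := by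
  have hmem : π ∈ alternatingGroup (Fin n) := Equiv.Perm.mem_alternatingGroup.mpr hπ
  rw [← Equiv.Perm.closure_three_cycles_eq_alternating] at hmem
  have hle : Subgroup.closure {σ : Equiv.Perm (Fin n) | σ.IsThreeCycle}
      ≤ Subgroup.comap (PeH (J := J)) (RubikGroup J n) := by
    rw [Subgroup.closure_le]
    intro c hc
    have hconj : IsConj c⁻¹ c := by
      rw [Equiv.Perm.isConj_iff_cycleType_eq]
      exact hc.inv.cycleType.trans hc.cycleType.symm
    obtain ⟨g, h1⟩ := isConj_iff.mp hconj
    have hcc : ⁅c, g⁆ = c * c := by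
      have h2 : ⁅c, g⁆ = c * (g * c⁻¹ * g⁻¹) := by group
      rw [h2, h1]
    have hc3 : c ^ 3 = 1 := by
      rw [← hc.orderOf]
      exact pow_orderOf_eq_one c
    have hc4 : c = ⁅c, g⁆ * ⁅c, g⁆ := by
      rw [hcc]
      have h4 : c * c * (c * c) = c ^ 3 * c := by
        rw [pow_succ, pow_two, ← mul_assoc]
      rw [h4, hc3, one_mul]
    show PeH (J := J) c ∈ RubikGroup J n
    rw [hc4, map_mul]
    have hcom : ⁅PeH (J := J) c, PeH (J := J) g⁆ ∈ RubikGroup J n :=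
      Subgroup.commutator_mem_commutator (PeH_mem c) (PeH_mem g)
    rw [map_commutatorElement]
    exact mul_mem hcom hcom
  exact hle hmem

/-! ### Hard direction: twists -/

/-- The subgroup of `Fin n → J` of twists lying in the Rubik group. -/
def Sgrp (J : Type*) [Group J] (n : ℕ) : Subgroup (Fin n → J) where
  carrier := {f | De f ∈ RubikGroup J n}
  one_mem' := by
    have h : De (1 : Fin n → J) = 1 := Equiv.ext fun x => by simp
    show De (1 : Fin n → J) ∈ RubikGroup J n
    rw [h]; exact one_mem _
  mul_mem' := by
    intro f g hf hg
    show De (f * g) ∈ RubikGroup J n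
    have h : De (f * g) = De g * De f := by
      rw [De_mul g f]; rfl
    rw [h]
    exact mul_mem hg hf
  inv_mem' := by
    intro f hf
    show De f⁻¹ ∈ RubikGroup J n
    have h : De f⁻¹ = (De f)⁻¹ := by
      rw [De_inv]; rfl
    rw [h]
    exact inv_mem hf

lemma comm_De_PeH (f : Fin n → J) (π : Equiv.Perm (Fin n)) :
    ⁅De f, PeH π⁆ = De (fun k => (f (π⁻¹ k))⁻¹ * f k) := by
  rw [commutatorElement_def, PeH_inv, De_inv]
  apply Equiv.ext
  intro x
  show (x.1 * (f (π⁻¹ x.2))⁻¹ * f (π (π⁻¹ x.2)), π (π⁻¹ x.2))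
      = (x.1 * ((f (π⁻¹ x.2))⁻¹ * f x.2), x.2)
  rw [(by exact π.apply_symm_apply : ∀ y, π (π⁻¹ y) = y), mul_assoc]

lemma gen1_mem {i j : Fin n} (hij : i ≠ j) (g : J) :
    (fun k => if k = i then g else if k = j then g⁻¹ else 1) ∈ Sgrp J n := by
  show De _ ∈ RubikGroup J n
  have heq : De (fun k => if k = i then g else if k = j then g⁻¹ else 1)
      = ⁅De (fun k => if k = i then g else 1), PeH (Equiv.swap i j)⁆ := by
    rw [comm_De_PeH]
    congr 1
    funext k
    rw [Equiv.swap_inv]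
    by_cases hki : k = i
    · subst hki
      simp [Equiv.swap_apply_left, Ne.symm hij]
    · by_cases hkj : k = j
      · subst hkj
        simp [Equiv.swap_apply_right, hij, Ne.symm hij, hki]
      · simp [Equiv.swap_apply_of_ne_of_ne hki hkj, hki, hkj]
  rw [heq]
  exact Subgroup.commutator_mem_commutator (De_mem _) (PeH_mem _)

/-- Single-slot insertion of an element, as a homomorphism (inverted to fix variance). -/
def Em (i : Fin n) : J →* Equiv.Perm (J × Fin n) where
  toFun g := De (fun k => if k = i then g⁻¹ else 1)
  map_one' := Equiv.ext fun x => by simp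
  map_mul' a b := by
    show De (fun k => if k = i then (a * b)⁻¹ else 1) = _
    rw [De_mul]
    congr 1
    funext k
    split_ifs with h
    · rw [mul_inv_rev]
    · rw [one_mul]

lemma Em_apply (i : Fin n) (g : J) :
    Em i g = De (fun k => if k = i then g⁻¹ else 1) := rfl

lemma single_comm_mem (i : Fin n) {g : J} (hg : g ∈ commutator J) :
    (fun k => if k = i then g else 1) ∈ Sgrp J n := by
  show De _ ∈ RubikGroup J n
  have h1 : De (fun k => if k = i then g else 1) = Em i g⁻¹ := by
    rw [Em_apply]
    congr 1
    funext k
    split_ifs <;> simp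
  rw [h1]
  have hmap : Subgroup.map (Em (J := J) i) (commutator J) ≤ RubikGroup J n := by
    rw [commutator_def, Subgroup.map_commutator, RubikGroup]
    refine Subgroup.commutator_mono ?_ ?_ <;>
    · rintro x ⟨y, -, rfl⟩
      rw [Em_apply]
      exact De_mem _
  exact hmap ⟨g⁻¹, inv_mem hg, rfl⟩

lemma De_mem_rubik (hn : 0 < n) (f : Fin n → J)
    (hprod : ∏ i : Fin n, Abelianization.of (f i) = 1) : De f ∈ RubikGroup J n := by
  classical
  set i0 : Fin n := ⟨0, hn⟩ with hi0
  set r : ℕ → (Fin n → J) :=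
    fun k i => if (i : ℕ) = 0 then ((List.ofFn f).take k).prod
      else if (i : ℕ) < k then 1 else f i with hr
  have hr1 : r 1 = f := by
    funext i
    by_cases h : (i : ℕ) = 0
    · have : i = i0 := Fin.ext h
      subst this
      simp [hr, List.ofFn_succ']
      cases n with
      | zero => omega
      | succ m =>
        rw [show ((List.ofFn f).take 1) = [f ⟨0, hn⟩] from ?_]
        · simp [hi0]
        · have : List.ofFn f = f ⟨0, hn⟩ :: List.ofFn (fun i : Fin m => f i.succ) := by
            rw [List.ofFn_succ]
            rfl
          rw [this]
          rfl
    · simp only [hr, if_neg h]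
      have : ¬ (i : ℕ) < 1 := by omega
      rw [if_neg this]
  have hstep : ∀ k : ℕ, 1 ≤ k → k < n → (r k)⁻¹ * r (k + 1) ∈ Sgrp J n := by
    intro k hk1 hkn
    set jk : Fin n := ⟨k, hkn⟩ with hjk
    have hne : i0 ≠ jk := by
      intro h
      have := congrArg Fin.val h
      simp [hi0, hjk] at this
      omega
    have heq : (r k)⁻¹ * r (k + 1)
        = fun i => if i = i0 then f jk else if i = jk then (f jk)⁻¹ else 1 := by
      funext i
      show (r k i)⁻¹ * r (k + 1) i = _
      by_cases h0 : (i : ℕ) = 0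
      · have hii : i = i0 := Fin.ext h0
        rw [if_pos hii]
        simp only [hr, if_pos h0]
        have hlen : k < (List.ofFn f).length := by simpa using hkn
        rw [List.prod_take_succ _ _ hlen]
        rw [List.getElem_ofFn]
        have : (⟨k, by simpa using hkn⟩ : Fin n) = jk := rfl
        rw [this, inv_mul_cancel_left]
      · have hii : i ≠ i0 := fun h => h0 (by rw [h])
        rw [if_neg hii]
        simp only [hr, if_neg h0]
        by_cases hik : i = jk
        · rw [if_pos hik]
          have hv : (i : ℕ) = k := by rw [hik]
          have h1 : ¬ (i : ℕ) < k := by omega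
          have h2 : (i : ℕ) < k + 1 := by omega
          rw [if_neg h1, if_pos h2, mul_one]
          rw [hik]
        · rw [if_neg hik]
          have hvk : (i : ℕ) ≠ k := by
            intro h
            exact hik (Fin.ext (by simpa using h))
          by_cases hlt : (i : ℕ) < k
          · have h2 : (i : ℕ) < k + 1 := by omega
            rw [if_pos hlt, if_pos h2, inv_one, one_mul]
          · have h2 : ¬ (i : ℕ) < k + 1 := by omega
            rw [if_neg hlt, if_neg h2, inv_mul_cancel]
    rw [heq]
    exact gen1_mem hne (f jk)
  have hchain : ∀ k : ℕ, 1 ≤ k → k ≤ n → f⁻¹ * r k ∈ Sgrp J n := by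
    intro k
    induction k with
    | zero => intro h; omega
    | succ m ih =>
      intro _ hmn
      by_cases hm : m = 0
      · subst hm
        rw [hr1, inv_mul_cancel]
        exact one_mem _
      · have h1m : 1 ≤ m := by omega
        have hmlt : m < n := by omega
        have h1 := ih h1m (le_of_lt hmlt)
        have h2 := hstep m h1m hmlt
        have : f⁻¹ * r (m + 1) = (f⁻¹ * r m) * ((r m)⁻¹ * r (m + 1)) := by group
        rw [this]
        exact mul_mem h1 h2
  have hrn : r n = fun i => if i = i0 then (List.ofFn f).prod else 1 := by
    funext i
    by_cases h0 : (i : ℕ) = 0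
    · have hii : i = i0 := Fin.ext h0
      rw [if_pos hii]
      simp only [hr, if_pos h0]
      congr 1
      apply List.take_of_length_le
      simp
    · have hii : i ≠ i0 := fun h => h0 (by rw [h])
      rw [if_neg hii]
      simp only [hr, if_neg h0]
      rw [if_pos i.isLt]
  have hq : (List.ofFn f).prod ∈ commutator J := by
    have h1 : Abelianization.of (List.ofFn f).prod = 1 := by
      rw [map_list_prod, List.map_ofFn, List.prod_ofFn]
      simpa [Function.comp] using hprod
    exact (QuotientGroup.eq_one_iff _).mp h1
  have hlast : r n ∈ Sgrp J n := by
    rw [hrn]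
    exact single_comm_mem i0 hq
  have hf : f ∈ Sgrp J n := by
    have h1 := hchain n (by omega) le_rfl
    have : f = (r n) * (f⁻¹ * r n)⁻¹ := by group
    rw [this]
    exact mul_mem hlast (inv_mem h1)
  exact hf

end Stmt8Aux

open Stmt8Aux in
/-- an equivariant permutation `σ ∈ Sym_J(J × Fin n)` lies in the Rubik group
`Rub_J(J × Fin n)` if and only if the induced permutation `τ_σ` of `Fin n` is even and the
product of the images in the abelianization of `J` of the elements `c_i(σ)` (determined by
`σ (1, i) = (c_i(σ), τ_σ i)`) is trivial. -/
theorem stmt_8 {J : Type*} [Group J] {n : ℕ} (hn : 1 < n)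
    (σ : Equiv.Perm (J × Fin n)) (hσ : σ ∈ EquivariantPerm J n) :
    σ ∈ RubikGroup J n ↔
      ∃ τ : Equiv.Perm (Fin n),
        (∀ i : Fin n, (σ (1, i)).2 = τ i) ∧
        Equiv.Perm.sign τ = 1 ∧
        ∏ i : Fin n, Abelianization.of ((σ (1, i)).1) = 1 := by
  constructor
  · intro h
    obtain ⟨x, hker, hx⟩ := rubik_le_ker h
    have hx' : x = ⟨σ, hσ⟩ := Subtype.ext hx
    rw [hx'] at hker
    have h1 : psi (J := J) (n := n) ⟨σ, hσ⟩ = 1 := hker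
    rw [Prod.ext_iff] at h1
    refine ⟨tauE σ hσ, fun i => rfl, ?_, ?_⟩
    · exact h1.1
    · exact h1.2
  · rintro ⟨τ, hτ, hsign, hprod⟩
    have hτeq : tauE σ hσ = τ := Equiv.ext fun i => hτ i
    rw [decomp hσ]
    refine mul_mem ?_ ?_
    · exact PeH_mem_rubik (by rw [hτeq]; exact hsign)
    · exact De_mem_rubik (by omega) _ hprod
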